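/- Let K be a finite field with q elements and L the extension of K of degree s inside a fixed algebraic closure, let F = K((t)) ⊆ E = L((t)) be the corresponding fields of formal Laurent series, and let σ be the automorphism of E fixing t and acting on each coefficient by x ↦ x^q. Suppose γ₀ ∈ F^× is a scalar and there exist d ≥ 1 and an invertible d × d matrix δ over E with γ₀ · I_d = δ · σ(δ) · σ²(δ) ⋯ σ^{s−1}(δ), where σ is applied entrywise. Then s divides d · v(γ₀), where v : F^× → ℤ is the t-adic valuation. -/

import Mathlib

/-- Let `K` be a finite field with `q` elements and `L/K` the extension of degree `s`, with
`F = K((t)) ⊆ E = L((t))` the corresponding Laurent series fields, and `σ` the automorphism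
of `E` fixing `t` and raising each coefficient to the `q`-th power.  If `γ₀ ∈ F^×` is a
scalar (a nonzero Laurent series with coefficients in `K`) such that
`γ₀ · I_d = δ · σ(δ) · σ²(δ) ⋯ σ^{s-1}(δ)` for some invertible `d × d` matrix `δ` over `E`,
then `s` divides `d · v(γ₀)` where `v` is the `t`-adic valuation (the order). -/
theorem dvd_mul_order_of_scalar_is_twisted_norm
    (K L : Type*) [Field K] [Field L] [Fintype K] [Algebra K L]
    [FiniteDimensional K L]
    (q s : ℕ) (hq : Fintype.card K = q) (hs : Module.finrank K L = s)
    (σ : LaurentSeries L ≃+* LaurentSeries L)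
    (hσ : ∀ (f : LaurentSeries L) (n : ℤ), (σ f).coeff n = (f.coeff n) ^ q)
    (γ₀ : LaurentSeries L) (hγ₀ : γ₀ ≠ 0)
    (hγK : ∀ n : ℤ, γ₀.coeff n ∈ (algebraMap K L).range)
    (d : ℕ) (hd : 1 ≤ d)
    (δ : Matrix (Fin d) (Fin d) (LaurentSeries L)) (hδ : IsUnit δ)
    (heq : γ₀ • (1 : Matrix (Fin d) (Fin d) (LaurentSeries L))
      = (List.ofFn fun k : Fin s => δ.map fun x => (⇑σ)^[(k : ℕ)] x).prod) :
    (s : ℤ) ∣ (d : ℤ) * γ₀.order := by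
  have hq0 : q ≠ 0 := by
    subst hq; exact Fintype.card_ne_zero
  -- σ preserves nonzeroness and order
  have hσ0 : ∀ f : LaurentSeries L, f ≠ 0 → σ f ≠ 0 := fun f hf h0 => by
    apply hf
    have := σ.injective (h0.trans (map_zero σ).symm)
    exact this
  have hσord : ∀ f : LaurentSeries L, f ≠ 0 → (σ f).order = f.order := by
    intro f hf
    have hσf : σ f ≠ 0 := hσ0 f hf
    apply le_antisymm
    · apply HahnSeries.order_le_of_coeff_ne_zero
      rw [hσ f f.order]
      exact pow_ne_zero q (HahnSeries.coeff_order_eq_zero.not.mpr hf)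
    · apply HahnSeries.order_le_of_coeff_ne_zero
      have := HahnSeries.coeff_order_eq_zero.not.mpr hσf
      rw [hσ f (σ f).order] at this
      exact fun h => this (by rw [h, zero_pow hq0])
  -- iterate
  have hσiter : ∀ (k : ℕ) (f : LaurentSeries L), f ≠ 0 →
      ((⇑σ)^[k] f ≠ 0 ∧ ((⇑σ)^[k] f).order = f.order) := by
    intro k
    induction k with
    | zero => intro f hf; simp [hf]
    | succ n ih =>
      intro f hf
      rw [Function.iterate_succ_apply']
      obtain ⟨h1, h2⟩ := ih f hf
      exact ⟨hσ0 _ h1, (hσord _ h1).trans h2⟩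
  -- take determinants of heq
  have hdet := congrArg Matrix.det heq
  rw [Matrix.det_smul, Matrix.det_one, mul_one, Fintype.card_fin] at hdet
  -- determinant commutes with entrywise σ-iterates
  have hmapdet : ∀ (k : ℕ) (A : Matrix (Fin d) (Fin d) (LaurentSeries L)),
      (A.map fun x => (⇑σ)^[k] x).det = (⇑σ)^[k] A.det := by
    intro k
    induction k with
    | zero => intro A; simp [Matrix.map_id]
    | succ n ih =>
      intro A
      have h1 : (A.map fun x => (⇑σ)^[n+1] x) = (A.map fun x => (⇑σ)^[n] x).map ⇑σ := by
        ext i j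
        simp [Matrix.map_apply, Function.iterate_succ_apply']
      have h2 : ∀ M : Matrix (Fin d) (Fin d) (LaurentSeries L), (M.map ⇑σ).det = σ M.det := by
        intro M
        rw [σ.map_det M, RingEquiv.mapMatrix_apply]
      rw [h1, h2, ih]
      exact (Function.iterate_succ_apply' (⇑σ) n A.det).symm
  have hdetprod : ((List.ofFn fun k : Fin s =>
      δ.map fun x => (⇑σ)^[(k : ℕ)] x).prod).det
      = (List.ofFn fun k : Fin s => (⇑σ)^[(k : ℕ)] δ.det).prod := by
    rw [← Matrix.coe_detMonoidHom, map_list_prod, List.map_ofFn]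
    refine congrArg List.prod (congrArg List.ofFn (funext fun k => ?_))
    simp only [Function.comp_apply, Matrix.coe_detMonoidHom]
    exact hmapdet (k : ℕ) δ
  rw [hdetprod] at hdet
  have hdδ : δ.det ≠ 0 := ((Matrix.isUnit_iff_isUnit_det δ).mp hδ).ne_zero
  -- order of a product of a list of nonzero elements of equal order
  have key : ∀ (l : List (LaurentSeries L)) (o : ℤ),
      (∀ x ∈ l, x ≠ 0 ∧ x.order = o) →
      l.prod ≠ 0 ∧ l.prod.order = l.length • o := by
    intro l o
    induction l with
    | nil => intro _; simp
    | cons a t ih =>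
      intro h
      obtain ⟨ha, hao⟩ := h a List.mem_cons_self
      obtain ⟨ht, hto⟩ := ih fun x hx => h x (List.mem_cons_of_mem a hx)
      refine ⟨mul_ne_zero ha ht, ?_⟩
      rw [List.prod_cons, HahnSeries.order_mul ha ht, hao, hto, List.length_cons,
        succ_nsmul, add_comm]
  obtain ⟨-, hord⟩ := key (List.ofFn fun k : Fin s => (⇑σ)^[(k : ℕ)] δ.det) δ.det.order
    (by
      intro x hx
      rw [List.mem_ofFn] at hx
      obtain ⟨k, rfl⟩ := hx
      exact hσiter (k : ℕ) δ.det hdδ)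
  rw [← hdet, HahnSeries.order_pow, List.length_ofFn] at hord
  simp only [nsmul_eq_mul] at hord
  exact ⟨δ.det.order, hord⟩
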